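/- If F is an edge cut of a simple graph G, then E(G − F) ≤ E(G), where G − F is the subgraph obtained from G by deleting the edges in F, and E denotes graph energy. -/

import Mathlib

open Polynomial MeasureTheory

/-- The adjacency matrix of a simple graph over `ℝ` is Hermitian. -/
lemma adjHerm {V : Type*} [Fintype V] (G : SimpleGraph V) [DecidableRel G.Adj] :
    (SimpleGraph.adjMatrix ℝ G).IsHermitian := by
  ext i j
  simp [Matrix.conjTranspose_apply, SimpleGraph.adj_comm]

/-- The energy of a graph: sum of absolute values of adjacency eigenvalues. -/
noncomputable def energy {V : Type*} [Fintype V] [DecidableEq V] (G : SimpleGraph V)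
    [DecidableRel G.Adj] : ℝ :=
  ∑ i, |(adjHerm G).eigenvalues i|

/-- `SnE n k` is the graph `S_{n, n-1+k}`: the star on `n` vertices with center `0`,
plus `k` extra edges joining the fixed leaf `1` to the leaves `2, …, k+1`. -/
def SnE (n k : ℕ) : SimpleGraph (Fin n) where
  Adj v w := v ≠ w ∧ (v.val = 0 ∨ w.val = 0 ∨
    (v.val = 1 ∧ 2 ≤ w.val ∧ w.val ≤ k + 1) ∨ (w.val = 1 ∧ 2 ≤ v.val ∧ v.val ≤ k + 1))
  symm := ⟨by intro v w h; exact ⟨h.1.symm, by tauto⟩⟩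
  loopless := ⟨by intro v h; exact h.1 rfl⟩

instance {n k : ℕ} : DecidableRel (SnE n k).Adj := fun v w => by
  unfold SnE; exact inferInstanceAs (Decidable (_ ∧ _))

instance {α β : Type*} (G : SimpleGraph α) (H : SimpleGraph β) [DecidableRel G.Adj]
    [DecidableRel H.Adj] : DecidableRel (G ⊕g H).Adj := fun u v =>
  match u, v with
  | Sum.inl a, Sum.inl b => decidable_of_iff (G.Adj a b) (by simp [SimpleGraph.sum])
  | Sum.inr a, Sum.inr b => decidable_of_iff (H.Adj a b) (by simp [SimpleGraph.sum])
  | Sum.inl _, Sum.inr _ => .isFalse (by simp [SimpleGraph.sum])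
  | Sum.inr _, Sum.inl _ => .isFalse (by simp [SimpleGraph.sum])


/-- `cutDelete G S` is the graph obtained from `G` by deleting the edge cut consisting of
all edges between `S` and its complement. -/
def cutDelete {V : Type*} (G : SimpleGraph V) (S : Set V) : SimpleGraph V where
  Adj v w := G.Adj v w ∧ (v ∈ S ↔ w ∈ S)
  symm := ⟨fun v w h => ⟨G.symm.symm v w h.1, h.2.symm⟩⟩
  loopless := ⟨fun v h => G.loopless.irrefl v h.1⟩

instance {V : Type*} (G : SimpleGraph V) [DecidableRel G.Adj] (S : Set V)
    [DecidablePred (· ∈ S)] : DecidableRel (cutDelete G S).Adj := fun v w => by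
  unfold cutDelete; exact inferInstanceAs (Decidable (_ ∧ _))

section DaySoAux

open Matrix

variable {n : Type*} [Fintype n] [DecidableEq n]

lemma trace_mul_le_sum_abs_eig {A : Matrix n n ℝ} (hA : A.IsHermitian)
    (U : Matrix n n ℝ) (hU : U ∈ Matrix.unitaryGroup n ℝ) :
    (U * A).trace ≤ ∑ i, |hA.eigenvalues i| := by
  set V : Matrix n n ℝ := (hA.eigenvectorUnitary : Matrix n n ℝ) with hV
  have hspec : A = V * Matrix.diagonal hA.eigenvalues * star V := hA.spectral_theorem
  have hW : star V * U * V ∈ Matrix.unitaryGroup n ℝ :=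
    mul_mem (mul_mem (Unitary.star_mem hA.eigenvectorUnitary.2) hU) hA.eigenvectorUnitary.2
  set W : Matrix n n ℝ := star V * U * V with hWdef
  have htr : (U * A).trace = (W * Matrix.diagonal hA.eigenvalues).trace := by
    conv_lhs => rw [hspec]
    have h1 : U * (V * Matrix.diagonal hA.eigenvalues * star V)
        = (U * V * Matrix.diagonal hA.eigenvalues) * star V := by simp only [mul_assoc]
    rw [h1, Matrix.trace_mul_comm]
    have h2 : star V * (U * V * Matrix.diagonal hA.eigenvalues)
        = (star V * U * V) * Matrix.diagonal hA.eigenvalues := by simp only [mul_assoc]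
    rw [h2]
  have hWone : W * star W = 1 := (Matrix.mem_unitaryGroup_iff).mp hW
  have hWd : ∀ i, |W i i| ≤ 1 := by
    intro i
    rw [abs_le_one_iff_mul_self_le_one]
    have h1 : ∑ j, W i j * W i j = 1 := by
      have := congrFun (congrFun hWone i) i
      simpa [Matrix.mul_apply, Matrix.one_apply, Matrix.conjTranspose_apply] using this
    calc W i i * W i i ≤ ∑ j, W i j * W i j :=
          Finset.single_le_sum (f := fun j => W i j * W i j)
            (fun j _ => mul_self_nonneg _) (Finset.mem_univ i)
      _ = 1 := h1
  rw [htr]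
  have hWD : (W * Matrix.diagonal hA.eigenvalues).trace = ∑ i, W i i * hA.eigenvalues i := by
    simp [Matrix.trace, Matrix.diag, Matrix.mul_apply, Matrix.diagonal]
  rw [hWD]
  refine Finset.sum_le_sum fun i _ => ?_
  calc W i i * hA.eigenvalues i ≤ |W i i * hA.eigenvalues i| := le_abs_self _
    _ = |W i i| * |hA.eigenvalues i| := abs_mul _ _
    _ ≤ 1 * |hA.eigenvalues i| := mul_le_mul_of_nonneg_right (hWd i) (abs_nonneg _)
    _ = |hA.eigenvalues i| := one_mul _

lemma exists_unitary_trace_eq {A : Matrix n n ℝ} (hA : A.IsHermitian) :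
    ∃ U ∈ Matrix.unitaryGroup n ℝ, (U * A).trace = ∑ i, |hA.eigenvalues i| := by
  set V : Matrix n n ℝ := (hA.eigenvectorUnitary : Matrix n n ℝ) with hV
  have hspec : A = V * Matrix.diagonal hA.eigenvalues * star V := hA.spectral_theorem
  set s : n → ℝ := fun i => if hA.eigenvalues i < 0 then -1 else 1 with hs
  have hs2 : ∀ i, s i * s i = 1 := by
    intro i; by_cases h : hA.eigenvalues i < 0 <;> simp [hs, h]
  have hstar : star (Matrix.diagonal s) = Matrix.diagonal s := by
    ext i j
    by_cases h : i = j
    · subst h; simp [Matrix.conjTranspose_apply, Matrix.diagonal_apply]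
    · simp [Matrix.conjTranspose_apply, Matrix.diagonal_apply, h, Ne.symm h]
  have hsD : Matrix.diagonal s ∈ Matrix.unitaryGroup n ℝ := by
    rw [Matrix.mem_unitaryGroup_iff, hstar, Matrix.diagonal_mul_diagonal]
    have : (fun i => s i * s i) = fun _ => (1 : ℝ) := funext hs2
    rw [this, Matrix.diagonal_one]
  have hVV : star V * V = 1 := (Matrix.mem_unitaryGroup_iff').mp hA.eigenvectorUnitary.2
  refine ⟨V * Matrix.diagonal s * star V,
    mul_mem (mul_mem hA.eigenvectorUnitary.2 hsD) (Unitary.star_mem hA.eigenvectorUnitary.2), ?_⟩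
  have key : V * Matrix.diagonal s * star V * A
      = V * (Matrix.diagonal s * Matrix.diagonal hA.eigenvalues) * star V := by
    conv_lhs => rw [hspec]
    calc V * Matrix.diagonal s * star V * (V * Matrix.diagonal hA.eigenvalues * star V)
        = V * Matrix.diagonal s * (star V * V) * (Matrix.diagonal hA.eigenvalues * star V) := by
          simp only [mul_assoc]
      _ = V * (Matrix.diagonal s * Matrix.diagonal hA.eigenvalues) * star V := by
          rw [hVV]; simp only [mul_one, mul_assoc]
  rw [key, Matrix.trace_mul_comm, ← mul_assoc, hVV, one_mul, Matrix.diagonal_mul_diagonal,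
    Matrix.trace_diagonal]
  refine Finset.sum_congr rfl fun i _ => ?_
  by_cases h : hA.eigenvalues i < 0
  · simp [hs, h, abs_of_neg h]
  · simp [hs, h, abs_of_nonneg (le_of_not_gt h)]

end DaySoAux

/-- Deleting an edge cut does not increase the energy of a graph (Day–So). -/
theorem energy_deleteEdgeCut_le {V : Type*} [Fintype V] [DecidableEq V]
    (G : SimpleGraph V) [DecidableRel G.Adj] (S : Set V) [DecidablePred (· ∈ S)] :
    energy (cutDelete G S) ≤ energy G := by
  classical
  set A : Matrix V V ℝ := SimpleGraph.adjMatrix ℝ G with hA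
  set B : Matrix V V ℝ := SimpleGraph.adjMatrix ℝ (cutDelete G S) with hBdef
  set d : V → ℝ := fun v => if v ∈ S then 1 else -1 with hd
  set D : Matrix V V ℝ := Matrix.diagonal d with hD
  have hd2 : ∀ v, d v * d v = 1 := by
    intro v; by_cases h : v ∈ S <;> simp [hd, h]
  have hDstar : star D = D := by
    ext i j
    by_cases h : i = j
    · subst h; simp [hD, Matrix.conjTranspose_apply, Matrix.diagonal_apply]
    · simp [hD, Matrix.conjTranspose_apply, Matrix.diagonal_apply, h, Ne.symm h]
  have hDmem : D ∈ Matrix.unitaryGroup V ℝ := by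
    rw [Matrix.mem_unitaryGroup_iff, hDstar, hD, Matrix.diagonal_mul_diagonal]
    have : (fun i => d i * d i) = fun _ => (1 : ℝ) := funext hd2
    rw [this, Matrix.diagonal_one]
  have hB : B = (2⁻¹ : ℝ) • (A + D * A * D) := by
    ext v w
    have hDAD : (D * A * D) v w = d v * (A v w * d w) := by
      rw [hD, Matrix.mul_diagonal, Matrix.diagonal_mul]
      ring
    rw [Matrix.smul_apply, Matrix.add_apply, hDAD]
    simp only [hBdef, Matrix.smul_apply, Matrix.add_apply, hDAD,
      SimpleGraph.adjMatrix_apply, hA]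
    have hcd : (cutDelete G S).Adj v w ↔ G.Adj v w ∧ (v ∈ S ↔ w ∈ S) := Iff.rfl
    by_cases hv : v ∈ S <;> by_cases hw : w ∈ S <;>
      by_cases hadj : G.Adj v w <;>
      simp [hcd, hv, hw, hadj, hd] <;> norm_num
  obtain ⟨U, hU, hUeq⟩ := exists_unitary_trace_eq (adjHerm (cutDelete G S))
  have e1 : energy (cutDelete G S) = (U * B).trace := hUeq.symm
  have hsplit : (U * B).trace = 2⁻¹ * ((U * A).trace + ((D * U * D) * A).trace) := by
    rw [hB, Matrix.mul_smul, Matrix.trace_smul, Matrix.mul_add, Matrix.trace_add, smul_eq_mul]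
    congr 2
    have h1 : U * (D * A * D) = (U * D * A) * D := by simp only [mul_assoc]
    rw [h1, Matrix.trace_mul_comm]
    congr 1
    simp only [mul_assoc]
  have le1 : (U * A).trace ≤ energy G := trace_mul_le_sum_abs_eig (adjHerm G) U hU
  have le2 : ((D * U * D) * A).trace ≤ energy G :=
    trace_mul_le_sum_abs_eig (adjHerm G) _ (mul_mem (mul_mem hDmem hU) hDmem)
  rw [e1, hsplit]
  linarith
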